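/- For every n ≥ 1 there exists a bounded polytope P ⊂ R^n with 2(2^n − 1) facet-defining inequalities such that P contains exactly one integer point in its interior, and the removal of any single defining inequality results in a polyhedron containing strictly more integer points in its interior. Consequently c(n,1) ≥ 2(2^n − 1). -/

import Mathlib

open Finset

namespace Stmt13Construction

lemma card_nes (n : ℕ) : Fintype.card {S : Finset (Fin n) // S.Nonempty} = 2^n - 1 := by
  have h1 : Fintype.card {S : Finset (Fin n) // S.Nonempty}
      = Fintype.card {S : Finset (Fin n) // ¬ (S = ∅)} :=
    Fintype.card_congr (Equiv.subtypeEquivRight (by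
      intro S; simp [Finset.nonempty_iff_ne_empty]))
  rw [h1, Fintype.card_subtype_compl, Fintype.card_subtype_eq (∅ : Finset (Fin n))]
  simp [Fintype.card_finset]

noncomputable def nes (n : ℕ) : {S : Finset (Fin n) // S.Nonempty} ≃ Fin (2^n - 1) :=
  Fintype.equivFinOfCardEq (card_nes n)

noncomputable def rowS (n : ℕ) (i : Fin (2*(2^n-1))) : {S : Finset (Fin n) // S.Nonempty} :=
  if h : (i : ℕ) < 2^n - 1 then (nes n).symm ⟨i, h⟩
  else (nes n).symm ⟨(i : ℕ) - (2^n - 1), by have := i.isLt; omega⟩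

noncomputable def rowSgn (n : ℕ) (i : Fin (2*(2^n-1))) : ℝ :=
  if (i : ℕ) < 2^n - 1 then 1 else -1

noncomputable def Amat (n : ℕ) : Matrix (Fin (2*(2^n-1))) (Fin n) ℝ :=
  fun i j => rowSgn n i * (if j ∈ (rowS n i).1 then 1 else -(1/(2*(n:ℝ))))

noncomputable def bvec (n : ℕ) (i : Fin (2*(2^n-1))) : ℝ :=
  ((rowS n i).1.card : ℝ) - 1/(4*(n:ℝ))

lemma rowSgn_cases (n : ℕ) (i : Fin (2*(2^n-1))) : rowSgn n i = 1 ∨ rowSgn n i = -1 := by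
  unfold rowSgn; split <;> simp

noncomputable def encP (n : ℕ) (S : {S : Finset (Fin n) // S.Nonempty}) : Fin (2*(2^n-1)) :=
  ⟨(nes n S : ℕ), by have := (nes n S).isLt; omega⟩

noncomputable def encN (n : ℕ) (S : {S : Finset (Fin n) // S.Nonempty}) : Fin (2*(2^n-1)) :=
  ⟨(nes n S : ℕ) + (2^n - 1), by have := (nes n S).isLt; omega⟩

lemma rowS_encP (n : ℕ) (S) : rowS n (encP n S) = S := by
  unfold rowS encP
  rw [dif_pos (by simpa using (nes n S).isLt)]
  simp

lemma rowSgn_encP (n : ℕ) (S) : rowSgn n (encP n S) = 1 := by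
  unfold rowSgn encP
  rw [if_pos (by simpa using (nes n S).isLt)]

lemma rowS_encN (n : ℕ) (S) : rowS n (encN n S) = S := by
  unfold rowS encN
  rw [dif_neg (by simp)]
  simp

lemma rowSgn_encN (n : ℕ) (S) : rowSgn n (encN n S) = -1 := by
  unfold rowSgn encN
  rw [if_neg (by simp)]

lemma row_inj (n : ℕ) (i i' : Fin (2*(2^n-1))) (hs : rowSgn n i = rowSgn n i')
    (hS : rowS n i = rowS n i') : i = i' := by
  unfold rowSgn rowS at *
  split_ifs at hs hS with h1 h2 h2
  · rw [Equiv.symm_apply_eq] at hS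
    apply Fin.ext
    have : ((nes n) ((nes n).symm ⟨(i:ℕ), h1⟩) : ℕ) = (i : ℕ) := by simp
    rw [hS] at this
    simpa using this.symm
  · norm_num at hs
  · norm_num at hs
  · rw [Equiv.symm_apply_eq] at hS
    have : ((nes n) ((nes n).symm ⟨(i:ℕ) - (2^n-1), by have := i.isLt; omega⟩) : ℕ)
        = (i : ℕ) - (2^n-1) := by simp
    rw [hS] at this
    simp at this
    apply Fin.ext
    omega

lemma sum_split {n : ℕ} (d : ℝ) (S : Finset (Fin n)) (f : Fin n → ℝ) :
    ∑ j, (if j ∈ S then (1:ℝ) else -d) * f j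
      = ∑ j ∈ S, f j - d * ∑ j ∈ Sᶜ, f j := by
  rw [← Finset.sum_add_sum_compl S fun j => (if j ∈ S then (1:ℝ) else -d) * f j]
  have h1 : ∑ j ∈ S, (if j ∈ S then (1:ℝ) else -d) * f j = ∑ j ∈ S, f j :=
    Finset.sum_congr rfl (fun j hj => by rw [if_pos hj, one_mul])
  have h2 : ∑ j ∈ Sᶜ, (if j ∈ S then (1:ℝ) else -d) * f j = -d * ∑ j ∈ Sᶜ, f j := by
    rw [Finset.mul_sum]
    exact Finset.sum_congr rfl (fun j hj => by rw [if_neg (by simpa using hj)])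
  rw [h1, h2]; ring

lemma row_val (n : ℕ) (i : Fin (2*(2^n-1))) (x : Fin n → ℝ) :
    ∑ j, Amat n i j * x j
      = rowSgn n i * (∑ j ∈ (rowS n i).1, x j
          - (1/(2*(n:ℝ))) * ∑ j ∈ ((rowS n i).1)ᶜ, x j) := by
  have : ∀ j, Amat n i j * x j
      = rowSgn n i * ((if j ∈ (rowS n i).1 then (1:ℝ) else -(1/(2*(n:ℝ)))) * x j) := by
    intro j; unfold Amat; ring
  rw [Finset.sum_congr rfl (fun j _ => this j), ← Finset.mul_sum,
    sum_split (1/(2*(n:ℝ))) (rowS n i).1 x]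

lemma sum_pt {n : ℕ} (S T : Finset (Fin n)) (σ : ℤ) :
    ∑ j ∈ S, ((if j ∈ T then σ else 0 : ℤ) : ℝ) = (σ:ℝ) * ((S ∩ T).card : ℝ) := by
  have : ∀ j ∈ S, ((if j ∈ T then σ else 0 : ℤ) : ℝ) = if j ∈ T then (σ:ℝ) else 0 := by
    intro j _; split <;> simp
  rw [Finset.sum_congr rfl this, Finset.sum_ite_mem]
  simp [mul_comm]

lemma val_pt (n : ℕ) (i : Fin (2*(2^n-1))) (T : Finset (Fin n)) (σ : ℤ) :
    ∑ j, Amat n i j * (((if j ∈ T then σ else 0 : ℤ)) : ℝ)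
      = (rowSgn n i * σ) * ((((rowS n i).1 ∩ T).card : ℝ)
          - (1/(2*(n:ℝ))) * ((T \ (rowS n i).1).card : ℝ)) := by
  rw [row_val n i (fun j => ((if j ∈ T then σ else 0 : ℤ) : ℝ))]
  rw [sum_pt (rowS n i).1 T σ, sum_pt ((rowS n i).1)ᶜ T σ]
  have : ((rowS n i).1)ᶜ ∩ T = T \ (rowS n i).1 := by
    ext a; simp [Finset.mem_sdiff, and_comm]
  rw [this]; ring

lemma key_lt {n : ℕ} (hn : 1 ≤ n) (S T : Finset (Fin n)) (hS : S.Nonempty)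
    (τ : ℝ) (hτ : τ = 1 ∨ τ = -1) (hne : τ = 1 → S ≠ T) :
    τ * (((S ∩ T).card : ℝ) - (1/(2*(n:ℝ))) * ((T \ S).card))
      < (S.card : ℝ) - 1/(4*(n:ℝ)) := by
  have hn0 : (0:ℝ) < n := by exact_mod_cast hn
  have hn1 : (1:ℝ) ≤ n := by exact_mod_cast hn
  have hd : (0:ℝ) < 1/(2*(n:ℝ)) := by positivity
  have hg : (0:ℝ) < 1/(4*(n:ℝ)) := by positivity
  have hgd : 1/(4*(n:ℝ)) < 1/(2*(n:ℝ)) := by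
    rw [div_lt_div_iff₀ (by positivity) (by positivity)]; nlinarith
  have hg14 : 1/(4*(n:ℝ)) ≤ 1/4 := by
    rw [div_le_div_iff₀ (by positivity) (by norm_num)]; nlinarith
  have hTn : ((T \ S).card : ℝ) ≤ n := by
    have := Finset.card_le_univ (T \ S)
    simp only [Finset.card_univ, Fintype.card_fin] at this
    exact_mod_cast this
  have hdT : (1/(2*(n:ℝ))) * ((T \ S).card) ≤ 1/2 := by
    calc (1/(2*(n:ℝ))) * ((T \ S).card) ≤ (1/(2*(n:ℝ))) * n := by
          exact mul_le_mul_of_nonneg_left hTn (le_of_lt hd)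
      _ = 1/2 := by field_simp
  have hScard : (1:ℝ) ≤ S.card := by exact_mod_cast Finset.card_pos.mpr hS
  have hIT : ((S ∩ T).card : ℝ) ≤ S.card :=
    by exact_mod_cast Finset.card_le_card (Finset.inter_subset_left)
  have hITnn : (0:ℝ) ≤ ((S ∩ T).card : ℝ) := by positivity
  have hdTnn : (0:ℝ) ≤ (1/(2*(n:ℝ))) * ((T \ S).card) := by positivity
  rcases hτ with h1 | h1
  · subst h1
    have hne' := hne rfl
    rcases em (S ⊆ T) with hsub | hsub
    · have hint : S ∩ T = S := Finset.inter_eq_left.mpr hsub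
      have hdiff : (T \ S).Nonempty := by
        rw [Finset.sdiff_nonempty]
        intro hTS
        exact hne' (Finset.Subset.antisymm hsub hTS)
      have h1d : (1:ℝ) ≤ (T \ S).card := by exact_mod_cast Finset.card_pos.mpr hdiff
      have : 1/(2*(n:ℝ)) ≤ (1/(2*(n:ℝ))) * ((T \ S).card) := by nlinarith
      rw [hint]
      nlinarith
    · have : S ∩ T ⊂ S := by
        refine Finset.ssubset_iff_subset_ne.mpr ⟨Finset.inter_subset_left, ?_⟩
        intro h
        exact hsub (Finset.inter_eq_left.mp h)
      have hlt : (S ∩ T).card < S.card := Finset.card_lt_card this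
      have : ((S ∩ T).card : ℝ) + 1 ≤ (S.card : ℝ) := by exact_mod_cast hlt
      nlinarith
  · subst h1
    nlinarith

lemma viol {n : ℕ} {d : ℝ} (hd : 0 ≤ d) (S : Finset (Fin n)) (f : Fin n → ℝ)
    (h1 : ∀ j ∈ S, 1 ≤ f j) (h2 : ∀ j ∈ Sᶜ, f j ≤ 0) :
    (S.card : ℝ) ≤ ∑ j ∈ S, f j - d * ∑ j ∈ Sᶜ, f j := by
  have hA : (S.card : ℝ) ≤ ∑ j ∈ S, f j := by
    calc (S.card : ℝ) = ∑ j ∈ S, (1:ℝ) := by simp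
      _ ≤ ∑ j ∈ S, f j := Finset.sum_le_sum h1
  have hB : ∑ j ∈ Sᶜ, f j ≤ 0 := Finset.sum_nonpos h2
  nlinarith

-- every nonzero integer point strictly violates some row
lemma violation {n : ℕ} (hn : 1 ≤ n) (z : Fin n → ℤ) (hz : z ≠ 0) :
    ∃ i, bvec n i < ∑ j, Amat n i j * (z j : ℝ) := by
  have hn0 : (0:ℝ) < n := by exact_mod_cast hn
  have hd : (0:ℝ) ≤ 1/(2*(n:ℝ)) := by positivity
  have hg : (0:ℝ) < 1/(4*(n:ℝ)) := by positivity
  have hzj : ∃ j, z j ≠ 0 := by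
    by_contra h
    push_neg at h
    exact hz (funext fun j => h j)
  by_cases hp : ∃ j, 0 < z j
  · set P : Finset (Fin n) := Finset.univ.filter (fun j => 0 < z j) with hP
    have hPne : P.Nonempty := by
      obtain ⟨j, hj⟩ := hp
      exact ⟨j, by simp [hP, hj]⟩
    refine ⟨encP n ⟨P, hPne⟩, ?_⟩
    rw [row_val, rowS_encP, rowSgn_encP, one_mul]
    have hval : (P.card : ℝ) ≤ ∑ j ∈ P, (z j : ℝ)
        - (1/(2*(n:ℝ))) * ∑ j ∈ Pᶜ, (z j : ℝ) := by
      apply viol hd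
      · intro j hj
        have : 0 < z j := by simpa [hP] using hj
        exact_mod_cast this
      · intro j hj
        have : ¬ 0 < z j := by
          intro h; rw [Finset.mem_compl] at hj; exact hj (by simp [hP, h])
        have : z j ≤ 0 := not_lt.mp this
        exact_mod_cast this
    unfold bvec
    rw [rowS_encP]
    simp only
    linarith
  · push_neg at hp
    obtain ⟨j₀, hj₀⟩ := hzj
    have hj₀' : z j₀ < 0 := lt_of_le_of_ne (hp j₀) hj₀
    set N : Finset (Fin n) := Finset.univ.filter (fun j => z j < 0) with hN
    have hNne : N.Nonempty := ⟨j₀, by simp [hN, hj₀']⟩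
    refine ⟨encN n ⟨N, hNne⟩, ?_⟩
    rw [row_val, rowS_encN, rowSgn_encN]
    have hval : (N.card : ℝ) ≤ ∑ j ∈ N, (-(z j : ℝ))
        - (1/(2*(n:ℝ))) * ∑ j ∈ Nᶜ, (-(z j : ℝ)) := by
      apply viol hd
      · intro j hj
        have : z j < 0 := by simpa [hN] using hj
        have : z j ≤ -1 := by omega
        have : (z j : ℝ) ≤ -1 := by exact_mod_cast this
        linarith
      · intro j hj
        have h1 : ¬ z j < 0 := by
          intro h; rw [Finset.mem_compl] at hj; exact hj (by simp [hN, h])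
        have : (0:ℝ) ≤ (z j : ℝ) := by exact_mod_cast not_lt.mp h1
        linarith
    rw [Finset.sum_neg_distrib, Finset.sum_neg_distrib] at hval
    unfold bvec
    rw [rowS_encN]
    simp only
    linarith

def zsgn (n : ℕ) (i : Fin (2*(2^n-1))) : ℤ := if (i : ℕ) < 2^n - 1 then 1 else -1

lemma zsgn_cast (n : ℕ) (i : Fin (2*(2^n-1))) : ((zsgn n i : ℤ) : ℝ) = rowSgn n i := by
  unfold zsgn rowSgn; split <;> simp

noncomputable def cert (n : ℕ) (i₀ : Fin (2*(2^n-1))) : Fin n → ℤ :=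
  fun j => if j ∈ (rowS n i₀).1 then zsgn n i₀ else 0

lemma cert_sat {n : ℕ} (hn : 1 ≤ n) (i i₀ : Fin (2*(2^n-1))) (hne : i ≠ i₀) :
    ∑ j, Amat n i j * (cert n i₀ j : ℝ) < bvec n i := by
  unfold cert
  rw [val_pt, zsgn_cast]
  have hτ : rowSgn n i * rowSgn n i₀ = 1 ∨ rowSgn n i * rowSgn n i₀ = -1 := by
    rcases rowSgn_cases n i with h | h <;> rcases rowSgn_cases n i₀ with h' | h' <;>
      rw [h, h'] <;> norm_num
  have hne' : rowSgn n i * rowSgn n i₀ = 1 → (rowS n i).1 ≠ (rowS n i₀).1 := by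
    intro h1 hSeq
    have hsgn : rowSgn n i = rowSgn n i₀ := by
      rcases rowSgn_cases n i with h | h <;> rcases rowSgn_cases n i₀ with h' | h' <;>
        rw [h, h'] <;> rw [h, h'] at h1 <;> norm_num at h1
    exact hne (row_inj n i i₀ hsgn (Subtype.ext hSeq))
  exact key_lt hn (rowS n i).1 (rowS n i₀).1 (rowS n i).2
    (rowSgn n i * rowSgn n i₀) hτ hne'

lemma cert_viol {n : ℕ} (hn : 1 ≤ n) (i₀ : Fin (2*(2^n-1))) :
    bvec n i₀ < ∑ j, Amat n i₀ j * (cert n i₀ j : ℝ) := by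
  have hn0 : (0:ℝ) < n := by exact_mod_cast hn
  unfold cert
  rw [val_pt, zsgn_cast]
  have h1 : rowSgn n i₀ * rowSgn n i₀ = 1 := by
    rcases rowSgn_cases n i₀ with h | h <;> rw [h] <;> norm_num
  rw [h1, Finset.inter_self, Finset.sdiff_self]
  unfold bvec
  have : (0:ℝ) < 1/(4*(n:ℝ)) := by positivity
  simp only [Finset.card_empty, Nat.cast_zero, mul_zero, sub_zero, one_mul]
  linarith

lemma cert_ne_zero {n : ℕ} (i₀ : Fin (2*(2^n-1))) : cert n i₀ ≠ 0 := by
  obtain ⟨j, hj⟩ := (rowS n i₀).2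
  intro h
  have := congrFun h j
  unfold cert at this
  rw [if_pos hj] at this
  unfold zsgn at this
  split at this <;> simp at this

lemma bvec_pos {n : ℕ} (hn : 1 ≤ n) (i : Fin (2*(2^n-1))) : 0 < bvec n i := by
  have hn1 : (1:ℝ) ≤ n := by exact_mod_cast hn
  have hg14 : 1/(4*(n:ℝ)) ≤ 1/4 := by
    rw [div_le_div_iff₀ (by positivity) (by norm_num)]; nlinarith
  have hScard : (1:ℝ) ≤ ((rowS n i).1.card : ℝ) := by
    exact_mod_cast Finset.card_pos.mpr (rowS n i).2
  unfold bvec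
  linarith

lemma zero_val {n : ℕ} (i : Fin (2*(2^n-1))) :
    ∑ j, Amat n i j * (((0 : Fin n → ℤ) j : ℤ) : ℝ) = 0 := by
  simp

lemma strict_set_eq {n : ℕ} (hn : 1 ≤ n) :
    {y : Fin n → ℤ | ∀ i, ∑ j, Amat n i j * (y j : ℝ) < bvec n i} = {0} := by
  ext z
  simp only [Set.mem_setOf_eq, Set.mem_singleton_iff]
  constructor
  · intro hz
    by_contra hz0
    obtain ⟨i, hi⟩ := violation hn z hz0
    exact absurd (hz i) (not_lt.mpr (le_of_lt hi))
  · rintro rfl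
    intro i
    have := zero_val (n := n) i
    simp only [Pi.zero_apply, Int.cast_zero, mul_zero, Finset.sum_const_zero] at this ⊢
    exact bvec_pos hn i

lemma weak_set_eq {n : ℕ} (hn : 1 ≤ n) :
    {y : Fin n → ℤ | ∀ i, ∑ j, Amat n i j * (y j : ℝ) ≤ bvec n i} = {0} := by
  ext z
  simp only [Set.mem_setOf_eq, Set.mem_singleton_iff]
  constructor
  · intro hz
    by_contra hz0
    obtain ⟨i, hi⟩ := violation hn z hz0
    exact absurd (hz i) (not_le.mpr hi)
  · rintro rfl
    intro i
    simp only [Pi.zero_apply, Int.cast_zero, mul_zero, Finset.sum_const_zero]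
    exact le_of_lt (bvec_pos hn i)

lemma bounded_set {n : ℕ} (hn : 1 ≤ n) :
    Bornology.IsBounded {x : Fin n → ℝ | ∀ i, ∑ j, Amat n i j * x j ≤ bvec n i} := by
  have hn0 : (0:ℝ) < n := by exact_mod_cast hn
  have hn1 : (1:ℝ) ≤ n := by exact_mod_cast hn
  have hd : (0:ℝ) < 1/(2*(n:ℝ)) := by positivity
  have hg : (0:ℝ) < 1/(4*(n:ℝ)) := by positivity
  have hdn : (1/(2*(n:ℝ))) * n = 1/2 := by field_simp
  apply (Metric.isBounded_closedBall (x := (0 : Fin n → ℝ)) (r := 2)).subset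
  intro x hx
  simp only [Set.mem_setOf_eq] at hx
  have hFin : Nonempty (Fin n) := ⟨⟨0, hn⟩⟩
  set U : {S : Finset (Fin n) // S.Nonempty} := ⟨Finset.univ, Finset.univ_nonempty⟩ with hU
  set s := ∑ j, x j with hs
  have hcardU : ((Finset.univ : Finset (Fin n)).card : ℝ) = n := by
    simp [Finset.card_univ]
  have hsU : s ≤ n := by
    have := hx (encP n U)
    rw [row_val, rowS_encP, rowSgn_encP, one_mul] at this
    unfold bvec at this
    rw [rowS_encP] at this
    simp only [hU, Finset.compl_univ, Finset.sum_empty, mul_zero, sub_zero] at this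
    rw [hcardU] at this
    linarith
  have hsL : -s ≤ n := by
    have := hx (encN n U)
    rw [row_val, rowS_encN, rowSgn_encN] at this
    unfold bvec at this
    rw [rowS_encN] at this
    simp only [hU, Finset.compl_univ, Finset.sum_empty, mul_zero, sub_zero] at this
    rw [hcardU] at this
    linarith
  have hds1 : (1/(2*(n:ℝ))) * s ≤ 1/2 := by nlinarith
  have hds2 : -((1/(2*(n:ℝ))) * s) ≤ 1/2 := by nlinarith
  have hxj : ∀ j, |x j| ≤ 2 := by
    intro j
    set Sj : {S : Finset (Fin n) // S.Nonempty} := ⟨{j}, Finset.singleton_nonempty j⟩ with hSj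
    have hcompl : ∑ k ∈ ({j} : Finset (Fin n))ᶜ, x k = s - x j := by
      have := Finset.sum_add_sum_compl ({j} : Finset (Fin n)) x
      rw [Finset.sum_singleton] at this
      linarith
    have h1 : x j - (1/(2*(n:ℝ))) * (s - x j) ≤ 1 := by
      have := hx (encP n Sj)
      rw [row_val, rowS_encP, rowSgn_encP, one_mul] at this
      unfold bvec at this
      rw [rowS_encP] at this
      simp only [hSj, Finset.sum_singleton, Finset.card_singleton, Nat.cast_one] at this
      rw [hcompl] at this
      linarith
    have h2 : -(x j - (1/(2*(n:ℝ))) * (s - x j)) ≤ 1 := by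
      have := hx (encN n Sj)
      rw [row_val, rowS_encN, rowSgn_encN] at this
      unfold bvec at this
      rw [rowS_encN] at this
      simp only [hSj, Finset.sum_singleton, Finset.card_singleton, Nat.cast_one] at this
      rw [hcompl] at this
      linarith
    rw [abs_le]
    constructor <;> nlinarith
  rw [Metric.mem_closedBall]
  rw [dist_pi_le_iff (by norm_num : (0:ℝ) ≤ 2)]
  intro j
  rw [Real.dist_eq, Pi.zero_apply, sub_zero]
  exact hxj j

end Stmt13Construction

open Stmt13Construction in
theorem stmt_13 {n : ℕ} (hn : 1 ≤ n) :
    (∃ (m : ℕ) (A : Matrix (Fin m) (Fin n) ℝ) (b : Fin m → ℝ),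
      m = 2 * (2 ^ n - 1) ∧
      Bornology.IsBounded {x : Fin n → ℝ | ∀ i, ∑ j, A i j * x j ≤ b i} ∧
      Set.ncard {y : Fin n → ℤ | ∀ i, ∑ j, A i j * (y j : ℝ) < b i} = 1 ∧
      ∀ i₀ : Fin m,
        {y : Fin n → ℤ | ∀ i, ∑ j, A i j * (y j : ℝ) < b i} ⊂
          {y : Fin n → ℤ | ∀ i, i ≠ i₀ → ∑ j, A i j * (y j : ℝ) < b i}) ∧
    ∀ c : ℕ,
      (∀ (m : ℕ) (A : Matrix (Fin m) (Fin n) ℝ) (b : Fin m → ℝ),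
        Bornology.IsBounded {x : Fin n → ℝ | ∀ i, ∑ j, A i j * x j ≤ b i} →
        Set.ncard {y : Fin n → ℤ | ∀ i, ∑ j, A i j * (y j : ℝ) ≤ b i} = 1 →
        ∃ S : Finset (Fin m), S.card ≤ c ∧
          {y : Fin n → ℤ | ∀ i ∈ S, ∑ j, A i j * (y j : ℝ) ≤ b i} =
            {y : Fin n → ℤ | ∀ i, ∑ j, A i j * (y j : ℝ) ≤ b i}) →
      2 * (2 ^ n - 1) ≤ c := by
  constructor
  · refine ⟨2*(2^n-1), Amat n, bvec n, rfl, bounded_set hn, ?_, ?_⟩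
    · rw [strict_set_eq hn]
      exact Set.ncard_singleton 0
    · intro i₀
      rw [strict_set_eq hn]
      rw [Set.ssubset_iff_subset_ne]
      constructor
      · intro y hy
        rw [Set.mem_singleton_iff] at hy
        subst hy
        intro i _
        simp only [Pi.zero_apply, Int.cast_zero, mul_zero, Finset.sum_const_zero]
        exact bvec_pos hn i
      · intro h
        have hmem : cert n i₀ ∈ {y : Fin n → ℤ | ∀ i, i ≠ i₀ →
            ∑ j, Amat n i j * (y j : ℝ) < bvec n i} := by
          intro i hi
          exact cert_sat hn i i₀ hi
        rw [← h, Set.mem_singleton_iff] at hmem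
        exact cert_ne_zero i₀ hmem
  · intro c hc
    obtain ⟨S, hSc, hSeq⟩ := hc (2*(2^n-1)) (Amat n) (bvec n) (bounded_set hn)
      (by rw [weak_set_eq hn]; exact Set.ncard_singleton 0)
    have hall : ∀ i₀, i₀ ∈ S := by
      intro i₀
      by_contra hi₀
      have hmem : cert n i₀ ∈ {y : Fin n → ℤ | ∀ i ∈ S,
          ∑ j, Amat n i j * (y j : ℝ) ≤ bvec n i} := by
        intro i hi
        exact le_of_lt (cert_sat hn i i₀ (fun h => hi₀ (h ▸ hi)))
      rw [hSeq] at hmem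
      exact absurd (hmem i₀) (not_le.mpr (cert_viol hn i₀))
    have hU : S = Finset.univ := Finset.eq_univ_iff_forall.mpr hall
    calc 2*(2^n-1) = Fintype.card (Fin (2*(2^n-1))) := (Fintype.card_fin _).symm
      _ = S.card := by rw [hU, Finset.card_univ]
      _ ≤ c := hSc
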